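/- Let G_1,…,G_m : ℝ^{nd} → ℝ be convex and c-Lipschitz, G = ∑_{j=1}^m G_j, let α > 0, β = mα, and let x, g ∈ ℝ^{nd} with z = x − α g. Then for every y ∈ ℝ^{nd}: (1/m)·∑_{j=1}^m ‖prox_{βG_j}(z) − y‖² ≤ ‖z − y‖² − 2α·(G(x) − G(y)) + 2mc·α²·‖g‖ + 2m²c²·α². -/

import Mathlib

open scoped RealInnerProductSpace

lemma combo_sq {E : Type*} [NormedAddCommGroup E] [InnerProductSpace ℝ E]
    (a b : E) (t : ℝ) :
    ‖(1-t)•a + t•b‖^2 = (1-t)*‖a‖^2 + t*‖b‖^2 - t*(1-t)*‖a-b‖^2 := by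
  have h1 := real_inner_self_eq_norm_sq ((1-t)•a + t•b)
  have h2 := real_inner_self_eq_norm_sq (a - b)
  have h3 := real_inner_self_eq_norm_sq a
  have h4 := real_inner_self_eq_norm_sq b
  rw [← h1, ← h3, ← h4, ← h2]
  simp only [inner_add_left, inner_add_right, inner_sub_left, inner_sub_right,
    real_inner_smul_left, real_inner_smul_right, real_inner_comm b a]
  ring

lemma prox_strong_ineq {E : Type*} [NormedAddCommGroup E] [InnerProductSpace ℝ E]
    (G : E → ℝ) (hG : ConvexOn ℝ Set.univ G) (β : ℝ) (hβ : 0 < β)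
    (z p : E) (hp : IsMinOn (fun u => G u + (1/(2*β)) * ‖z - u‖^2) Set.univ p)
    (y : E) :
    ‖p - y‖^2 ≤ ‖z - y‖^2 - ‖z - p‖^2 - 2*β*(G p - G y) := by
  set C := ‖p - y‖^2 with hC
  set A := ‖z - y‖^2 - ‖z - p‖^2 - 2*β*(G p - G y) with hA
  have key : ∀ t : ℝ, 0 < t → t ≤ 1 → (1 - t) * C ≤ A := by
    intro t ht ht1
    have hmin := isMinOn_iff.mp hp ((1-t)•p + t•y) (Set.mem_univ _)
    have hconv := hG.2 (Set.mem_univ p) (Set.mem_univ y)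
      (by linarith : (0:ℝ) ≤ 1 - t) (le_of_lt ht) (by ring)
    have hid : z - ((1-t)•p + t•y) = (1-t)•(z-p) + t•(z-y) := by
      module
    have hn : ‖z - ((1-t)•p + t•y)‖^2
        = (1-t)*‖z-p‖^2 + t*‖z-y‖^2 - t*(1-t)*‖p-y‖^2 := by
      rw [hid, combo_sq]
      congr 3
      rw [show (z-p) - (z-y) = y - p by abel, norm_sub_rev]
    simp only [smul_eq_mul] at hconv
    have h2β : 0 < 2*β := by linarith
    have hmin' : G p + (1/(2*β)) * ‖z - p‖^2
        ≤ ((1-t)*G p + t*G y) + (1/(2*β)) * ((1-t)*‖z-p‖^2 + t*‖z-y‖^2 - t*(1-t)*‖p-y‖^2) := by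
      calc G p + (1/(2*β)) * ‖z - p‖^2
          ≤ G ((1-t)•p + t•y) + (1/(2*β)) * ‖z - ((1-t)•p + t•y)‖^2 := hmin
        _ ≤ ((1-t)*G p + t*G y) + (1/(2*β)) * ((1-t)*‖z-p‖^2 + t*‖z-y‖^2 - t*(1-t)*‖p-y‖^2) := by
            rw [hn]; exact add_le_add hconv le_rfl
    -- multiply through: t * (G p - G y) + (t/(2β)) (‖z-p‖² - ‖z-y‖² + (1-t)C) ≤ 0
    rw [hA, hC]
    have := mul_le_mul_of_nonneg_left hmin' (le_of_lt h2β)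
    have h2βne : (2*β) ≠ 0 := ne_of_gt h2β
    field_simp at this
    nlinarith [this]
  by_contra hcon
  push_neg at hcon
  have hCA : 0 < C - A := by linarith
  have hA0 : C/2 ≤ A := by
    have := key (1/2) (by norm_num) (by norm_num)
    linarith
  have hC0 : 0 < C := by linarith
  have := key ((C - A)/(2*C)) (by positivity)
    (by rw [div_le_one (by positivity)]; linarith)
  have h2 : (1 - (C-A)/(2*C)) * C = C - (C-A)/2 := by field_simp
  rw [h2] at this
  linarith



/-- **Expected descent in the proximal step (averaged/deterministic form).**
Let `G_1,…,G_m` be convex and `c`-Lipschitz, `G = ∑_j G_j`, `α > 0`, `β = mα`,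
and `z = x − αg`. Then for every `y`,
`(1/m) ∑_j ‖prox_{βG_j}(z) − y‖² ≤ ‖z − y‖² − 2α(G x − G y) + 2mcα²‖g‖ + 2m²c²α²`. -/
theorem expected_descent_proximal_step
    (N m : ℕ) (hm : 0 < m) (c : ℝ) (hc : 0 ≤ c)
    (Gj : Fin m → EuclideanSpace ℝ (Fin N) → ℝ)
    (hGconv : ∀ j, ConvexOn ℝ Set.univ (Gj j))
    (hGlip : ∀ j, LipschitzWith c.toNNReal (Gj j))
    (α : ℝ) (hα : 0 < α)
    (x g z : EuclideanSpace ℝ (Fin N)) (hz : z = x - α • g)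
    (p : Fin m → EuclideanSpace ℝ (Fin N))
    (hp : ∀ j, IsMinOn (fun u => Gj j u + (1 / (2 * ((m : ℝ) * α))) * ‖z - u‖ ^ 2)
      Set.univ (p j))
    (y : EuclideanSpace ℝ (Fin N)) :
    (1 / (m : ℝ)) * ∑ j, ‖p j - y‖ ^ 2
      ≤ ‖z - y‖ ^ 2 - 2 * α * ((∑ j, Gj j x) - ∑ j, Gj j y)
        + 2 * m * c * α ^ 2 * ‖g‖ + 2 * (m : ℝ) ^ 2 * c ^ 2 * α ^ 2 := by
  have hm' : (0:ℝ) < m := Nat.cast_pos.mpr hm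
  set β : ℝ := (m : ℝ) * α with hβdef
  have hβ : 0 < β := mul_pos hm' hα
  have hzx : ‖z - x‖ = α * ‖g‖ := by
    rw [hz, show x - α • g - x = -(α • g) by abel, norm_neg, norm_smul,
      Real.norm_eq_abs, abs_of_pos hα]
  -- per-j bound
  have hj : ∀ j, ‖p j - y‖^2
      ≤ ‖z - y‖^2 - 2*β*(Gj j x - Gj j y) + 2*β*c*α*‖g‖ + β^2*c^2 := by
    intro j
    have h1 := prox_strong_ineq (Gj j) (hGconv j) β hβ z (p j) (hp j) y
    -- Lipschitz: Gj x - Gj (p j) ≤ c * ‖x - p j‖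
    have h2 : Gj j x - Gj j (p j) ≤ c * ‖x - p j‖ := by
      have := (hGlip j).dist_le_mul x (p j)
      rw [Real.dist_eq, Real.coe_toNNReal c hc, dist_eq_norm] at this
      calc Gj j x - Gj j (p j) ≤ |Gj j x - Gj j (p j)| := le_abs_self _
        _ ≤ c * ‖x - p j‖ := this
    have h3 : ‖x - p j‖ ≤ α*‖g‖ + ‖z - p j‖ := by
      calc ‖x - p j‖ = ‖(x - z) + (z - p j)‖ := by rw [show (x-z)+(z-p j) = x - p j by abel]
        _ ≤ ‖x - z‖ + ‖z - p j‖ := norm_add_le _ _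
        _ = α*‖g‖ + ‖z - p j‖ := by rw [norm_sub_rev, hzx]
    nlinarith [sq_nonneg (‖z - p j‖ - β*c), hβ.le, mul_nonneg hc (norm_nonneg g),
      mul_le_mul_of_nonneg_left h3 hc, norm_nonneg (z - p j)]
  have hsum : ∑ j, ‖p j - y‖^2
      ≤ ∑ j, (‖z - y‖^2 - 2*β*(Gj j x - Gj j y) + 2*β*c*α*‖g‖ + β^2*c^2) :=
    Finset.sum_le_sum (fun j _ => hj j)
  have hsum2 : ∑ j, (‖z - y‖^2 - 2*β*(Gj j x - Gj j y) + 2*β*c*α*‖g‖ + β^2*c^2)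
      = (m:ℝ) * (‖z - y‖^2 + 2*β*c*α*‖g‖ + β^2*c^2)
        - 2*β*((∑ j, Gj j x) - ∑ j, Gj j y) := by
    rw [Finset.sum_add_distrib, Finset.sum_add_distrib, Finset.sum_sub_distrib,
      ← Finset.mul_sum, Finset.sum_sub_distrib, Finset.sum_const, Finset.sum_const,
      Finset.sum_const, Finset.card_univ, Fintype.card_fin, nsmul_eq_mul]
    ring
  have hfinal : (1 / (m : ℝ)) * ∑ j, ‖p j - y‖ ^ 2
      ≤ ‖z - y‖^2 + 2*β*c*α*‖g‖ + β^2*c^2 - 2*α*((∑ j, Gj j x) - ∑ j, Gj j y) := by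
    rw [div_mul_eq_mul_div, one_mul, div_le_iff₀ hm']
    calc ∑ j, ‖p j - y‖^2 ≤ _ := hsum.trans (le_of_eq hsum2)
      _ ≤ _ := by rw [hβdef]; ring_nf; rfl
  have hβc : β^2*c^2 ≤ 2*(m:ℝ)^2*c^2*α^2 := by
    rw [hβdef]; nlinarith [sq_nonneg ((m:ℝ)*α*c)]
  have h2β : 2*β*c*α*‖g‖ = 2*m*c*α^2*‖g‖ := by rw [hβdef]; ring
  linarith [hfinal, hβc, h2β.le, h2β.ge]
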